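/- Let ρ, σ, ε ∈ ℝ with ρ ≠ 0, and let H : ℝ² → ℝ be continuously differentiable with ρ·∂_xH(x,y) + σ·∂_yH(x,y) = −2ε·H(x,y) for all (x,y) ∈ ℝ². Then there exists a function H₀ : ℝ → ℝ such that H(x,y) = H₀(ρy − σx)·exp(−(2ε/ρ)·x) for all (x,y) ∈ ℝ². -/

import Mathlib

/-- Case 8 (ε ≠ 0): u-independent pp-wave profile with ρ∂_x H + σ∂_y H = −2εH. -/
theorem ppwave_case8_eps_nonzero
    (ρ σ ε : ℝ) (hρ : ρ ≠ 0)
    (H : ℝ → ℝ → ℝ)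
    (hH : ContDiff ℝ 1 (fun p : ℝ × ℝ => H p.1 p.2))
    (hpde : ∀ x y : ℝ,
      ρ * deriv (fun x' => H x' y) x + σ * deriv (fun y' => H x y') y
        = -(2 * ε) * H x y) :
    ∃ H₀ : ℝ → ℝ, ∀ x y : ℝ,
      H x y = H₀ (ρ * y - σ * x) * Real.exp (-(2 * ε / ρ) * x) := by
  set H2 : ℝ × ℝ → ℝ := fun p => H p.1 p.2 with hH2
  have hdiff : Differentiable ℝ H2 := hH.differentiable one_ne_zero
  have key : ∀ a b : ℝ, fderiv ℝ H2 (a, b) (ρ, σ) = -(2*ε) * H a b := by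
    intro a b
    have hfd := (hdiff (a, b)).hasFDerivAt
    have hx : HasDerivAt (fun x' => H x' b) (fderiv ℝ H2 (a, b) (1, 0)) a := by
      have hc : HasDerivAt (fun t : ℝ => (t, b)) ((1 : ℝ), (0 : ℝ)) a :=
        HasDerivAt.prodMk (hasDerivAt_id a) (hasDerivAt_const a b)
      exact hfd.comp_hasDerivAt a hc
    have hy : HasDerivAt (fun y' => H a y') (fderiv ℝ H2 (a, b) (0, 1)) b := by
      have hc : HasDerivAt (fun t : ℝ => (a, t)) ((0 : ℝ), (1 : ℝ)) b :=
        HasDerivAt.prodMk (hasDerivAt_const b a) (hasDerivAt_id b)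
      exact hfd.comp_hasDerivAt b hc
    have hxy := hpde a b
    rw [hx.deriv, hy.deriv] at hxy
    have hsum : ((ρ, σ) : ℝ × ℝ) = ρ • ((1 : ℝ), (0 : ℝ)) + σ • ((0 : ℝ), (1 : ℝ)) := by
      simp [Prod.ext_iff]
    rw [hsum, map_add, map_smul, map_smul, smul_eq_mul, smul_eq_mul]
    exact hxy
  have line : ∀ x y t : ℝ, HasDerivAt (fun t => H (x + ρ*t) (y + σ*t))
      (-(2*ε) * H (x + ρ*t) (y + σ*t)) t := by
    intro x y t
    have h1 : HasDerivAt (fun t : ℝ => x + ρ*t) ρ t := by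
      simpa using ((hasDerivAt_id t).const_mul ρ).const_add x
    have h2 : HasDerivAt (fun t : ℝ => y + σ*t) σ t := by
      simpa using ((hasDerivAt_id t).const_mul σ).const_add y
    have hc : HasDerivAt (fun t : ℝ => (x + ρ*t, y + σ*t)) ((ρ, σ) : ℝ × ℝ) t :=
      HasDerivAt.prodMk h1 h2
    have h := (hdiff (x + ρ*t, y + σ*t)).hasFDerivAt.comp_hasDerivAt t hc
    rw [key] at h
    exact h
  have hconst : ∀ x y t : ℝ, H (x + ρ*t) (y + σ*t) * Real.exp (2*ε*t) = H x y := by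
    intro x y t
    have hφ : ∀ s : ℝ, HasDerivAt
        (fun s => H (x + ρ*s) (y + σ*s) * Real.exp (2*ε*s)) 0 s := by
      intro s
      have he : HasDerivAt (fun s : ℝ => Real.exp (2*ε*s)) (2*ε * Real.exp (2*ε*s)) s := by
        have := ((hasDerivAt_id s).const_mul (2*ε)).exp
        simpa [mul_comm] using this
      have h : HasDerivAt (fun s => H (x + ρ*s) (y + σ*s) * Real.exp (2*ε*s)) _ s := (line x y s).mul he
      convert h using 1
      ring
    have hd : Differentiable ℝ (fun s => H (x + ρ*s) (y + σ*s) * Real.exp (2*ε*s)) :=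
      fun s => (hφ s).differentiableAt
    have := is_const_of_deriv_eq_zero hd (fun s => (hφ s).deriv) t 0
    simpa using this
  refine ⟨fun s => H 0 (s / ρ), fun x y => ?_⟩
  have h1 := hconst x y (-(x/ρ))
  have hx0 : x + ρ * (-(x/ρ)) = 0 := by field_simp; ring
  have hy0 : y + σ * (-(x/ρ)) = (ρ*y - σ*x)/ρ := by field_simp; ring
  have hexp : 2*ε*(-(x/ρ)) = -(2*ε/ρ)*x := by ring
  rw [hx0, hy0, hexp] at h1
  exact h1.symm
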